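/- Causal explanations are input invariant: if two classifiers f₁ and f₂ satisfy f₂(x) = f₁(σ(x)) for a bijection σ of the feature space that acts coordinate-wise (σ(x) i = σ_i (x i) with each σ_i a bijection of D i), then X is a causal (abductive) explanation of f₂ at instance v if and only if X is a causal explanation of f₁ at the shifted instance σ(v). -/
import Mathlib


/-- causal (abductive) explanations are input invariant under
coordinate-wise bijections of the feature space. -/
theorem stmt_9 {F : Type*} [Fintype F] [DecidableEq F] {D : F → Type*}
    [∀ i, Nonempty (D i)] {K : Type*}
    (f₁ f₂ : (∀ i, D i) → K) (σ : ∀ i, D i ≃ D i)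
    (hshift : ∀ x : ∀ i, D i, f₂ x = f₁ (fun i => σ i (x i)))
    (v : ∀ i, D i) (X : Finset F) :
    -- X is a causal/abductive explanation of f₂ at v
    ((∀ x : ∀ i, D i, (∀ i ∈ X, x i = v i) → f₂ x = f₂ v) ∧
      ∀ X' : Finset F, X' ⊂ X →
        ¬ (∀ x : ∀ i, D i, (∀ i ∈ X', x i = v i) → f₂ x = f₂ v))
    ↔
    -- X is a causal/abductive explanation of f₁ at the shifted instance σ(v)
    ((∀ x : ∀ i, D i, (∀ i ∈ X, x i = σ i (v i)) → f₁ x = f₁ (fun i => σ i (v i))) ∧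
      ∀ X' : Finset F, X' ⊂ X →
        ¬ (∀ x : ∀ i, D i, (∀ i ∈ X', x i = σ i (v i)) →
            f₁ x = f₁ (fun i => σ i (v i)))) := by
  have key : ∀ S : Finset F,
      (∀ x : ∀ i, D i, (∀ i ∈ S, x i = v i) → f₂ x = f₂ v) ↔
      (∀ x : ∀ i, D i, (∀ i ∈ S, x i = σ i (v i)) → f₁ x = f₁ (fun i => σ i (v i))) := by
    intro S
    constructor
    · intro h x hx
      have h2 := h (fun i => (σ i).symm (x i)) (fun i hi => by
        simp [hx i hi])
      rw [hshift, hshift] at h2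
      simpa using h2
    · intro h x hx
      rw [hshift x, hshift v]
      exact h (fun i => σ i (x i)) (fun i hi => by simp [hx i hi])
  constructor
  · rintro ⟨h1, h2⟩
    exact ⟨(key X).mp h1, fun X' hX' hc => h2 X' hX' ((key X').mpr hc)⟩
  · rintro ⟨h1, h2⟩
    exact ⟨(key X).mpr h1, fun X' hX' hc => h2 X' hX' ((key X').mp hc)⟩
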